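/- For complex b and x with 0 < Re(b) and x > 0, and any 0 < c < Re(b): (1 + x)^{−b} = (1/2πi) ∫_{(c)} (Γ(v)Γ(b−v)/Γ(b)) x^{−v} dv, where the integral is over the vertical line Re(v) = c. -/

import Mathlib

open Complex MeasureTheory Set Filter Asymptotics

namespace MellinBarnesAux

lemma mellin_one_add_cpow (b s : ℂ) (hs : 0 < s.re) (hsb : s.re < b.re) :
    mellin (fun t : ℝ => ((1 + t : ℝ) : ℂ) ^ (-b)) s
      = Complex.Gamma s * Complex.Gamma (b - s) / Complex.Gamma b := by
  have hb : 0 < b.re := hs.trans hsb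
  have hΓb : Complex.Gamma b ≠ 0 := Complex.Gamma_ne_zero_of_re_pos hb
  have hbs : 0 < (b - s).re := by simp only [sub_re]; linarith
  have hbeta : Complex.Gamma s * Complex.Gamma (b - s)
      = Complex.Gamma b * betaIntegral s (b - s) := by
    simpa using Complex.Gamma_mul_Gamma_eq_betaIntegral hs hbs
  rw [hbeta, mul_div_cancel_left₀ _ hΓb]
  -- change of variables t = x / (1 - x)
  have himg : (fun x : ℝ => x / (1 - x)) '' Ioo 0 1 = Ioi 0 := by
    ext y
    constructor
    · rintro ⟨x, ⟨hx0, hx1⟩, rfl⟩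
      exact div_pos hx0 (by linarith)
    · intro hy
      refine ⟨y / (1 + y), ⟨div_pos hy (by linarith [mem_Ioi.mp hy]), ?_⟩, ?_⟩
      · rw [div_lt_one (by linarith [mem_Ioi.mp hy])]; linarith [mem_Ioi.mp hy]
      · have h1 : (0:ℝ) < 1 + y := by linarith [mem_Ioi.mp hy]
        field_simp
        ring
  have hinj : InjOn (fun x : ℝ => x / (1 - x)) (Ioo 0 1) := by
    rintro a ⟨ha0, ha1⟩ b' ⟨hb0, hb1⟩ h
    have h1 : (1:ℝ) - a ≠ 0 := by linarith
    have h2 : (1:ℝ) - b' ≠ 0 := by linarith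
    field_simp at h
    linarith [h]
  have hderiv : ∀ x ∈ Ioo (0:ℝ) 1, HasDerivWithinAt (fun x : ℝ => x / (1 - x))
      (((1 - x) ^ 2)⁻¹) (Ioo 0 1) x := by
    intro x ⟨hx0, hx1⟩
    have h1 : (1:ℝ) - x ≠ 0 := by linarith
    have := (hasDerivAt_id x).div ((hasDerivAt_id x).const_sub 1) h1
    simp only [one_mul, id_eq] at this
    refine this.hasDerivWithinAt.congr_deriv ?_
    rw [show (1:ℝ) - x - x * -1 = 1 by ring, one_div]
  rw [mellin, ← himg,
    integral_image_eq_integral_abs_deriv_smul measurableSet_Ioo hderiv hinj]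
  rw [betaIntegral, intervalIntegral.integral_of_le zero_le_one,
    integral_Ioc_eq_integral_Ioo]
  refine setIntegral_congr_fun measurableSet_Ioo fun x ⟨hx0, hx1⟩ => ?_
  have h1x : (0:ℝ) < 1 - x := by linarith
  have h1xne : ((1 - x : ℝ) : ℂ) ≠ 0 := Complex.ofReal_ne_zero.mpr (ne_of_gt h1x)
  have harg : ((1 - x : ℝ) : ℂ).arg ≠ Real.pi := by
    rw [Complex.arg_ofReal_of_nonneg h1x.le]
    exact Real.pi_ne_zero.symm
  have hbase : (1 : ℝ) + x / (1 - x) = (1 - x)⁻¹ := by field_simp; ring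
  have hsplit : ((x / (1 - x) : ℝ) : ℂ) ^ (s - 1)
      = (x : ℂ) ^ (s - 1) * ((1 - x : ℝ) : ℂ) ^ (-(s - 1)) := by
    rw [div_eq_mul_inv, Complex.ofReal_mul,
      mul_cpow_ofReal_nonneg hx0.le (inv_nonneg.mpr h1x.le),
      Complex.ofReal_inv, inv_cpow _ _ harg, ← cpow_neg]
  have hf : ((1 + x / (1 - x) : ℝ) : ℂ) ^ (-b) = ((1 - x : ℝ) : ℂ) ^ b := by
    rw [hbase, Complex.ofReal_inv, inv_cpow _ _ harg, ← cpow_neg, neg_neg]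
  simp only [hsplit, hf, real_smul, smul_eq_mul, Complex.ofReal_inv, Complex.ofReal_pow,
    abs_of_pos (inv_pos.mpr (pow_pos h1x 2))]
  have hpow2 : (((1 - x : ℝ) : ℂ) ^ (2:ℕ))⁻¹ = ((1 - x : ℝ) : ℂ) ^ (-2 : ℂ) := by
    rw [← Complex.cpow_natCast, ← cpow_neg]
    norm_num
  rw [hpow2]
  rw [show ((1-x:ℝ):ℂ) ^ (-2:ℂ) * ((x:ℂ) ^ (s-1) * ((1-x:ℝ):ℂ) ^ (-(s-1)) * ((1-x:ℝ):ℂ) ^ b)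
      = (x:ℂ) ^ (s-1) * (((1-x:ℝ):ℂ) ^ (-2:ℂ) * ((1-x:ℝ):ℂ) ^ (-(s-1)) * ((1-x:ℝ):ℂ) ^ b) by
        ring,
    ← cpow_add _ _ h1xne, ← cpow_add _ _ h1xne]
  have hcast : ((1 - x : ℝ) : ℂ) = 1 - (x:ℂ) := by push_cast; ring
  rw [hcast]
  congr 1
  ring

lemma f_contAt (b : ℂ) {t : ℝ} (ht : -1 < t) :
    ContinuousAt (fun t : ℝ => ((1 + t : ℝ) : ℂ) ^ (-b)) t := by
  have h1 : (0:ℝ) < 1 + t := by linarith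
  exact ContinuousAt.cpow (by fun_prop) continuousAt_const (Or.inl (by simpa using h1))

lemma f_norm (b : ℂ) {t : ℝ} (ht : 0 ≤ t) :
    ‖((1 + t : ℝ) : ℂ) ^ (-b)‖ = (1 + t) ^ (-b.re) := by
  rw [Complex.norm_cpow_eq_rpow_re_of_pos (by linarith), neg_re]

lemma f_mellinConv {b : ℂ} (hb : 0 < b.re) {s : ℂ}
    (hs : 0 < s.re) (hsb : s.re < b.re) :
    MellinConvergent (fun t : ℝ => ((1 + t : ℝ) : ℂ) ^ (-b)) s := by
  apply mellinConvergent_of_isBigO_rpow (a := b.re) (b := 0)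
  · apply ContinuousOn.locallyIntegrableOn _ measurableSet_Ioi
    exact fun t ht => (f_contAt b (by linarith [mem_Ioi.mp ht])).continuousWithinAt
  · rw [isBigO_iff]
    refine ⟨1, eventually_atTop.mpr ⟨1, fun t ht => ?_⟩⟩
    rw [f_norm b (by linarith), one_mul, Real.norm_rpow_of_nonneg (by linarith),
      Real.norm_of_nonneg (by linarith)]
    exact Real.rpow_le_rpow_of_nonpos (by linarith) (by linarith) (by linarith)
  · exact hsb
  · rw [isBigO_iff]
    refine ⟨1, eventually_nhdsWithin_of_forall fun t ht => ?_⟩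
    have ht' : 0 < t := ht
    rw [f_norm b ht'.le, neg_zero, Real.rpow_zero, norm_one, one_mul]
    calc (1 + t) ^ (-b.re) ≤ 1 ^ (-b.re) :=
          Real.rpow_le_rpow_of_nonpos one_pos (by linarith) (by linarith)
      _ = 1 := Real.one_rpow _
  · exact hs

lemma G_vertInt {b : ℂ} (hb : 0 < b.re) {c : ℝ} (hc0 : 0 < c) (hcb : c < b.re) :
    Complex.VerticalIntegrable
      (fun s => Complex.Gamma s * Complex.Gamma (b - s) / Complex.Gamma b) c := by
  have hΓb : Complex.Gamma b ≠ 0 := Complex.Gamma_ne_zero_of_re_pos hb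
  set f₂ : ℝ → ℂ := fun t => ((1 + t : ℝ) : ℂ) ^ (-(b + 2)) with hf₂
  set K : ℝ := ∫ t in Ioi (0:ℝ), t ^ (c + 1) * (1 + t) ^ (-(b.re + 2)) with hK
  set m : ℝ := min 1 (c ^ 2) with hm
  have hm0 : 0 < m := lt_min one_pos (pow_pos hc0 2)
  -- pointwise identity on the line
  have key : ∀ τ : ℝ, ∀ s : ℂ, s = c + τ * I →
      Complex.Gamma s * Complex.Gamma (b - s) / Complex.Gamma b
        = Complex.Gamma (b + 2) / Complex.Gamma b * mellin f₂ (s + 2) / (s * (s + 1)) := by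
    intro τ s hsdef
    have hsre : s.re = c := by rw [hsdef]; simp
    have hs0 : s ≠ 0 := fun h => by rw [h] at hsre; simp at hsre; linarith
    have hs1 : s + 1 ≠ 0 := fun h => by
      have : (s + 1).re = 0 := by rw [h]; simp
      simp [add_re, one_re, hsre] at this; linarith
    have hmel : mellin f₂ (s + 2)
        = Complex.Gamma (s + 2) * Complex.Gamma (b - s) / Complex.Gamma (b + 2) := by
      have := mellin_one_add_cpow (b + 2) (s + 2)
        (by simp [add_re, hsre]; linarith) (by simp [add_re, hsre]; linarith)
      rw [this]
      congr 2
      ring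
    have hΓb2 : Complex.Gamma (b + 2) ≠ 0 :=
      Complex.Gamma_ne_zero_of_re_pos (by simp [add_re]; linarith)
    have hΓs2 : Complex.Gamma (s + 2) = (s + 1) * (s * Complex.Gamma s) := by
      rw [show s + 2 = (s + 1) + 1 by ring, Complex.Gamma_add_one _ hs1,
        Complex.Gamma_add_one _ hs0]
    rw [hmel, hΓs2]
    field_simp
  -- uniform bound for the mellin transform on the shifted line
  have hbound : ∀ τ : ℝ, ‖mellin f₂ ((c + τ * I) + 2)‖ ≤ K := by
    intro τ
    rw [mellin]
    refine le_trans (norm_integral_le_integral_norm _) (le_of_eq ?_)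
    refine setIntegral_congr_fun measurableSet_Ioi fun t ht => ?_
    have ht' : (0:ℝ) < t := ht
    rw [norm_smul, f_norm (b + 2) ht'.le,
      Complex.norm_cpow_eq_rpow_re_of_pos ht',
      show ((c:ℂ) + τ * I + 2 - 1).re = c + 1 by simp; ring,
      show -(b + 2).re = -(b.re + 2) by simp]
  -- continuity of the integrand
  have hcont : Continuous fun τ : ℝ =>
      Complex.Gamma (c + τ * I) * Complex.Gamma (b - (c + τ * I)) / Complex.Gamma b := by
    rw [continuous_iff_continuousAt]
    intro τ
    have hline : ContinuousAt (fun τ : ℝ => (c : ℂ) + τ * I) τ := by fun_prop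
    have h1 : ContinuousAt (fun τ : ℝ => Complex.Gamma (c + τ * I)) τ := by
      refine ContinuousAt.comp ?_ hline
      apply (Complex.differentiableAt_Gamma _ ?_).continuousAt
      intro n h
      have : ((c:ℂ) + τ * I).re = c := by simp
      rw [h] at this
      simp at this
      linarith [this, Nat.cast_nonneg (α := ℝ) n]
    have h2 : ContinuousAt (fun τ : ℝ => Complex.Gamma (b - (c + τ * I))) τ := by
      refine ContinuousAt.comp ?_ (by fun_prop : ContinuousAt (fun τ : ℝ => b - ((c:ℂ) + τ * I)) τ)
      apply (Complex.differentiableAt_Gamma _ ?_).continuousAt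
      intro n h
      have : (b - ((c:ℂ) + τ * I)).re = b.re - c := by simp
      rw [h] at this
      simp at this
      linarith [this, Nat.cast_nonneg (α := ℝ) n]
    exact (h1.mul h2).div_const _
  -- the integrable majorant
  set M : ℝ := ‖Complex.Gamma (b + 2) / Complex.Gamma b‖ * K with hM
  have hMnn : 0 ≤ M := by
    have hK0 : 0 ≤ K := by
      apply setIntegral_nonneg measurableSet_Ioi
      intro t ht
      have h1 : (0:ℝ) < t := ht
      have h2 : (0:ℝ) < 1 + t := by linarith
      positivity
    exact mul_nonneg (norm_nonneg _) hK0
  refine Integrable.mono' ((integrable_inv_one_add_sq).const_mul (M / m))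
    hcont.aestronglyMeasurable (Filter.Eventually.of_forall fun τ => ?_)
  set s : ℂ := (c : ℂ) + τ * I with hs
  show ‖Complex.Gamma s * Complex.Gamma (b - s) / Complex.Gamma b‖ ≤ M / m * (1 + τ ^ 2)⁻¹
  rw [key τ s rfl]
  have hsre : s.re = c := by rw [hs]; simp
  -- lower bound for the denominator
  have hns : ‖s‖ ^ 2 = c ^ 2 + τ ^ 2 := by
    rw [← Complex.normSq_eq_norm_sq]
    simp [hs, Complex.normSq_apply]
    ring
  have hns1 : c ^ 2 + τ ^ 2 ≤ ‖s + 1‖ ^ 2 := by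
    rw [← Complex.normSq_eq_norm_sq]
    simp [hs, Complex.normSq_apply]
    nlinarith
  have hden : m * (1 + τ ^ 2) ≤ ‖s * (s + 1)‖ := by
    rw [norm_mul]
    have h1 : ‖s‖ ≤ ‖s + 1‖ := by
      have := abs_le_abs (pow_le_pow_left₀ (norm_nonneg s) (le_refl (‖s‖)) 2)
      nlinarith [norm_nonneg s, norm_nonneg (s + 1), hns, hns1]
    have h2 : c ^ 2 + τ ^ 2 ≤ ‖s‖ * ‖s + 1‖ := by
      nlinarith [norm_nonneg s, norm_nonneg (s + 1)]
    have h3 : m * (1 + τ ^ 2) ≤ c ^ 2 + τ ^ 2 := by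
      have hm1 : m ≤ 1 := min_le_left _ _
      have hm2 : m ≤ c ^ 2 := min_le_right _ _
      nlinarith [sq_nonneg τ]
    linarith
  have hnum : ‖Complex.Gamma (b + 2) / Complex.Gamma b * mellin f₂ (s + 2)‖ ≤ M := by
    rw [norm_mul, hM]
    exact mul_le_mul_of_nonneg_left (hbound τ) (norm_nonneg _)
  rw [norm_div]
  calc ‖Complex.Gamma (b + 2) / Complex.Gamma b * mellin f₂ (s + 2)‖ / ‖s * (s + 1)‖
      ≤ M / (m * (1 + τ ^ 2)) := by
        apply div_le_div₀ hMnn hnum (by positivity) hden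
    _ = M / m * (1 + τ ^ 2)⁻¹ := by
        field_simp

end MellinBarnesAux

open MellinBarnesAux in
theorem mellin_barnes_one_add_pow (b : ℂ) (hb : 0 < b.re) (x : ℝ) (hx : 0 < x)
    (c : ℝ) (hc0 : 0 < c) (hcb : c < b.re) :
    ((1 + x : ℝ) : ℂ) ^ (-b)
    = (1 / (2 * Real.pi)) *
        ∫ t : ℝ, (Complex.Gamma (c + t * Complex.I) * Complex.Gamma (b - (c + t * Complex.I))
            / Complex.Gamma b) * (x : ℂ) ^ (-(c + t * Complex.I)) := by
  set f : ℝ → ℂ := fun t => ((1 + t : ℝ) : ℂ) ^ (-b) with hf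
  have hconv : MellinConvergent f c := f_mellinConv hb (by simpa using hc0) (by simpa using hcb)
  have hvert : Complex.VerticalIntegrable (mellin f) c := by
    refine Integrable.congr (G_vertInt hb hc0 hcb) (Filter.Eventually.of_forall fun τ => ?_)
    exact (mellin_one_add_cpow b _ (by simpa using hc0) (by simpa using hcb)).symm
  have hinv := mellinInv_mellin_eq c f hx hconv hvert (f_contAt b (by linarith))
  rw [show ((1 + x : ℝ) : ℂ) ^ (-b) = f x from rfl, ← hinv, mellinInv]
  rw [real_smul]
  congr 1
  · push_cast; ring
  refine integral_congr_ae (Filter.Eventually.of_forall fun τ => ?_)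
  simp only [hf, mellin_one_add_cpow b ((c:ℂ) + τ * I) (by simpa using hc0) (by simpa using hcb),
    smul_eq_mul]
  ring
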